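/- Let V be a 2×2 special unitary matrix and let f₀, f₁ ∈ ℂ with |f₀| = |f₁| = 1. Let F be the operator on ℂ² ⊗ ℂ² diagonal in the computational basis with diagonal (f₀, 1, 1, f₁), let G := (V ⊗ V) F, and let P := I ⊗ |0⟩⟨0|. If G² P = P G², then either G = W ⊗ W for some unitary W on ℂ², or V is diagonal in the computational basis, or V is antidiagonal in the computational basis. -/

import Mathlib

open Kronecker Matrix

noncomputable section

set_option maxHeartbeats 1600000

/-- if `G = (V ⊗ V) F` with `V` special unitary and `F` diagonal with diagonal
`(f₀, 1, 1, f₁)`, `|f₀| = |f₁| = 1`, and `G²` commutes with `P = I ⊗ |0⟩⟨0|`, then either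
`G = W ⊗ W` for some unitary `W`, or `V` is diagonal, or `V` is antidiagonal. -/
theorem statement14 (V : Matrix (Fin 2) (Fin 2) ℂ)
    (hV : V ∈ Matrix.unitaryGroup (Fin 2) ℂ) (hVdet : V.det = 1)
    (f₀ f₁ : ℂ) (hf₀ : ‖f₀‖ = 1) (hf₁ : ‖f₁‖ = 1)
    (F : Matrix (Fin 2 × Fin 2) (Fin 2 × Fin 2) ℂ)
    (hF : F = Matrix.diagonal fun p =>
      if p = ((0 : Fin 2), (0 : Fin 2)) then f₀
      else if p = ((1 : Fin 2), (1 : Fin 2)) then f₁ else 1)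
    (G : Matrix (Fin 2 × Fin 2) (Fin 2 × Fin 2) ℂ) (hG : G = (V ⊗ₖ V) * F)
    (P : Matrix (Fin 2 × Fin 2) (Fin 2 × Fin 2) ℂ)
    (hP : P = (1 : Matrix (Fin 2) (Fin 2) ℂ) ⊗ₖ Matrix.single (0 : Fin 2) (0 : Fin 2) (1 : ℂ))
    (hcomm : G ^ 2 * P = P * G ^ 2) :
    (∃ W ∈ Matrix.unitaryGroup (Fin 2) ℂ, G = W ⊗ₖ W) ∨
    (V 0 1 = 0 ∧ V 1 0 = 0) ∨
    (V 0 0 = 0 ∧ V 1 1 = 0) := by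
  have hf₀ne : f₀ ≠ 0 := by intro h; simp [h] at hf₀
  have hf₁ne : f₁ ≠ 0 := by intro h; simp [h] at hf₁
  subst hF hG hP
  rw [Matrix.det_fin_two] at hVdet
  -- extract scalar equations
  have h1 := congrFun (congrFun hcomm ((0:Fin 2),(0:Fin 2))) ((1:Fin 2),(1:Fin 2))
  have h2 := congrFun (congrFun hcomm ((0:Fin 2),(0:Fin 2))) ((0:Fin 2),(1:Fin 2))
  have h3 := congrFun (congrFun hcomm ((1:Fin 2),(0:Fin 2))) ((1:Fin 2),(1:Fin 2))
  simp only [Matrix.mul_apply, Fintype.sum_prod_type, Fin.sum_univ_two, pow_two,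
    Matrix.kroneckerMap_apply, Matrix.diagonal_apply, Matrix.one_apply, Matrix.single,
    Matrix.of_apply, Prod.ext_iff, Prod.mk.injEq] at h1 h2 h3
  norm_num at h1 h2 h3
  ring_nf at h1 h2 h3
  by_cases hb : V 0 1 = 0
  · -- diagonal case
    right; left
    refine ⟨hb, ?_⟩
    have hu2 := congrFun (congrFun hV.2 1) 0
    have hu1 := congrFun (congrFun hV.2 0) 0
    simp only [Matrix.mul_apply, Fin.sum_univ_two, Matrix.conjTranspose_apply,
      Matrix.one_apply, Matrix.star_apply] at hu1 hu2
    norm_num [hb] at hu1 hu2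
    have ha : (starRingEnd ℂ) (V 0 0) ≠ 0 := by
      intro h0; rw [h0] at hu1; simp at hu1
    rcases hu2 with h | h
    · exact h
    · rw [h] at hu1; simp at hu1
  · -- b ≠ 0; derive K = 0
    have hK : f₀ * V 0 0 ^ 2 + 2 * (V 0 0 * V 1 1) + f₁ * V 1 1 ^ 2 = 0 := by
      have h : V 0 1 ^ 2 * f₁ * (f₀ * V 0 0 ^ 2 + 2 * (V 0 0 * V 1 1) + f₁ * V 1 1 ^ 2) = 0 := by
        linear_combination -h1
      rcases mul_eq_zero.mp h with h | h
      · rcases mul_eq_zero.mp h with h | h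
        · exact absurd (sq_eq_zero_iff.mp h) hb
        · exact absurd h hf₁ne
      · exact h
    have hE2 : V 0 0 + f₁ * V 1 1 = 0 := by
      have h : V 0 1 * (V 0 0 + f₁ * V 1 1) = 0 := by
        linear_combination (V 0 0 * V 0 1) * hK + h2 - (V 0 1 * (V 0 0 + f₁ * V 1 1)) * hVdet
      exact (mul_eq_zero.mp h).resolve_left hb
    have hE3 : f₀ * V 0 0 + V 1 1 = 0 := by
      have h : f₁ * (V 0 1 * (f₀ * V 0 0 + V 1 1)) = 0 := by
        linear_combination (f₁ * V 1 1 * V 0 1) * hK + h3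
          - (f₁ * V 0 1 * (f₀ * V 0 0 + V 1 1)) * hVdet
      rcases mul_eq_zero.mp h with h | h
      · exact absurd h hf₁ne
      · exact (mul_eq_zero.mp h).resolve_left hb
    by_cases ha : V 0 0 = 0
    · right; right
      refine ⟨ha, ?_⟩
      have := hE3; rw [ha] at this; linear_combination this
    · -- a ≠ 0 : f₀ * f₁ = 1
      have hff : f₀ * f₁ = 1 := by
        have h : V 0 0 * (f₀ * f₁ - 1) = 0 := by linear_combination f₁ * hE3 - hE2
        have := (mul_eq_zero.mp h).resolve_left ha
        linear_combination this
      left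
      set x : ℂ := Complex.exp (Complex.log f₀ / 2) with hxdef
      have hxx : x * x = f₀ := by
        rw [hxdef, ← Complex.exp_add]
        rw [show Complex.log f₀ / 2 + Complex.log f₀ / 2 = Complex.log f₀ by ring]
        exact Complex.exp_log hf₀ne
      have hxne : x ≠ 0 := Complex.exp_ne_zero _
      have hxabs : ‖x‖ = 1 := by
        rw [hxdef, Complex.norm_exp]
        simp [Complex.div_re, Complex.log_re, hf₀]
      set v : Fin 2 → ℂ := ![x, x⁻¹] with hvdef
      have hDD : Matrix.diagonal v * star (Matrix.diagonal v) = 1 := by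
        have : star (Matrix.diagonal v) = Matrix.diagonal (star v) :=
          Matrix.diagonal_conjTranspose v
        rw [this, Matrix.diagonal_mul_diagonal]
        have : (fun i => v i * star v i) = fun _ => (1 : ℂ) := by
          funext i
          fin_cases i <;> simp [hvdef, Pi.star_apply]
          · rw [Complex.mul_conj, Complex.normSq_eq_norm_sq, hxabs]; norm_num
          · rw [← Complex.conj_inv, Complex.mul_conj, Complex.normSq_eq_norm_sq]
            simp [hxabs]
        rw [this, Matrix.diagonal_one]
      refine ⟨V * Matrix.diagonal v, ?_, ?_⟩
      · rw [Matrix.mem_unitaryGroup_iff]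
        calc V * Matrix.diagonal v * star (V * Matrix.diagonal v)
            = V * (Matrix.diagonal v * star (Matrix.diagonal v)) * star V := by
              rw [StarMul.star_mul]; noncomm_ring
          _ = 1 := by rw [hDD, Matrix.mul_one]; exact hV.2
      · rw [Matrix.mul_kronecker_mul, Matrix.diagonal_kronecker_diagonal]
        have hfun : (fun p : Fin 2 × Fin 2 =>
            if p = ((0 : Fin 2), (0 : Fin 2)) then f₀
            else if p = ((1 : Fin 2), (1 : Fin 2)) then f₁ else 1)
            = fun p => v p.1 * v p.2 := by
          funext p
          rcases p with ⟨i, j⟩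
          fin_cases i <;> fin_cases j <;> simp [hvdef]
          · exact hxx.symm
          · exact (mul_inv_cancel₀ hxne).symm
          · exact (inv_mul_cancel₀ hxne).symm
          · rw [← mul_inv, hxx]
            field_simp
            linear_combination hff
        rw [hfun]

end
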